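/- For any natural number n ≥ 1, Γ((n-1)/2) / (Γ(n/2))^((n-1)/n) ≤ n^((n-1)/n) · 2^(1/n) / (n-1). -/

import Mathlib

open Real

private lemma aux1 (m : ℕ) (hm : 1 ≤ m) : (2:ℝ) * (m:ℝ)^m ≤ ((m:ℝ)+1)^m := by
  have hm' : (0:ℝ) < m := by exact_mod_cast hm
  have hb : (1:ℝ) + m * (1/m) ≤ (1 + 1/m)^m := by
    apply one_add_mul_le_pow
    have : (0:ℝ) ≤ 1/m := by positivity
    linarith
  have h2 : (1:ℝ) + (m:ℝ) * (1/m) = 2 := by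
    rw [mul_one_div, div_self hm'.ne']; norm_num
  have h3 : ((1:ℝ) + 1/m)^m * (m:ℝ)^m = ((m:ℝ)+1)^m := by
    rw [← mul_pow]; congr 1; field_simp
  calc (2:ℝ) * (m:ℝ)^m = ((1:ℝ) + m * (1/m)) * (m:ℝ)^m := by rw [h2]
    _ ≤ ((1:ℝ) + 1/m)^m * (m:ℝ)^m := by
        apply mul_le_mul_of_nonneg_right hb (by positivity)
    _ = ((m:ℝ)+1)^m := h3

private lemma aux2 (k : ℕ) : (2:ℝ)^k * (k.factorial : ℝ) ≤ ((k:ℝ)+1)^k := by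
  induction k with
  | zero => simp
  | succ k ih =>
    have h1 : (2:ℝ)^(k+1) * ((k+1).factorial : ℝ)
        = 2 * ((k:ℝ)+1) * ((2:ℝ)^k * (k.factorial : ℝ)) := by
      rw [Nat.factorial_succ]; push_cast; ring
    have h2 : (2:ℝ)^k * (k.factorial : ℝ) ≤ ((k:ℝ)+1)^k := ih
    have h3 : 2 * ((k:ℝ)+1) * (((k:ℝ)+1)^k) = 2 * ((k:ℝ)+1)^(k+1) := by ring
    have h4 : (2:ℝ) * ((k:ℝ)+1)^(k+1) ≤ (((k:ℝ)+1)+1)^(k+1) := by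
      have := aux1 (k+1) (by omega)
      push_cast at this ⊢
      linarith
    calc (2:ℝ)^(k+1) * ((k+1).factorial : ℝ)
        = 2 * ((k:ℝ)+1) * ((2:ℝ)^k * (k.factorial : ℝ)) := h1
      _ ≤ 2 * ((k:ℝ)+1) * (((k:ℝ)+1)^k) := by
          apply mul_le_mul_of_nonneg_left h2 (by positivity)
      _ = 2 * ((k:ℝ)+1)^(k+1) := h3
      _ ≤ (((k:ℝ)+1)+1)^(k+1) := h4
      _ = ((k:ℝ)+1+1)^(k+1) := by ring_nf
      _ = (((k+1:ℕ):ℝ)+1)^(k+1) := by push_cast; ring_nf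

/-- For any natural number `n ≥ 2`,
`Γ((n-1)/2) / (Γ(n/2))^((n-1)/n) ≤ n^((n-1)/n) · 2^(1/n) / (n-1)`. -/
theorem stmt_0 (n : ℕ) (hn : 2 ≤ n) :
    Real.Gamma (((n : ℝ) - 1) / 2) /
        (Real.Gamma ((n : ℝ) / 2)) ^ (((n : ℝ) - 1) / n) ≤
      (n : ℝ) ^ (((n : ℝ) - 1) / n) * (2 : ℝ) ^ (1 / (n : ℝ)) / ((n : ℝ) - 1) := by
  set N : ℝ := (n : ℝ) with hN
  have hN2 : (2:ℝ) ≤ N := by rw [hN]; exact_mod_cast hn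
  have hN0 : (0:ℝ) < N := by linarith
  set t : ℝ := (N - 1) / N with htdef
  set s : ℝ := 1 / N with hsdef
  have hts : t + s = 1 := by
    show (N - 1) / N + 1 / N = 1
    field_simp
    ring
  have ht0 : 0 ≤ t := by
    apply div_nonneg (by linarith) hN0.le
  have hs0 : 0 < s := by positivity
  have ha : (0:ℝ) < (N - 1) / 2 := by linarith
  have hx : N / 2 ∈ Set.Ioi (0:ℝ) := Set.mem_Ioi.mpr (by linarith)
  have hy : N ∈ Set.Ioi (0:ℝ) := hN0
  have hGx : 0 < Real.Gamma (N / 2) := Real.Gamma_pos_of_pos (by linarith)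
  have hGy : 0 < Real.Gamma N := Real.Gamma_pos_of_pos hN0
  have hGa : 0 < Real.Gamma ((N - 1) / 2) := Real.Gamma_pos_of_pos ha
  -- log-convexity
  have hconv := Real.convexOn_log_Gamma.2 hx hy ht0 hs0.le hts
  have hcombo : t • (N / 2) + s • N = (N - 1) / 2 + 1 := by
    simp only [smul_eq_mul, htdef, hsdef]
    field_simp
  rw [hcombo] at hconv
  simp only [Function.comp_apply, smul_eq_mul] at hconv
  have hG1 : Real.Gamma ((N - 1) / 2 + 1) ≤
      Real.Gamma (N / 2) ^ t * Real.Gamma N ^ s := by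
    have hGc : 0 < Real.Gamma ((N - 1) / 2 + 1) := Real.Gamma_pos_of_pos (by linarith)
    have e1 : Real.Gamma (N/2) ^ t = Real.exp (t * Real.log (Real.Gamma (N/2))) := by
      rw [Real.rpow_def_of_pos hGx, mul_comm]
    have e2 : Real.Gamma N ^ s = Real.exp (s * Real.log (Real.Gamma N)) := by
      rw [Real.rpow_def_of_pos hGy, mul_comm]
    calc Real.Gamma ((N - 1) / 2 + 1)
        = Real.exp (Real.log (Real.Gamma ((N - 1) / 2 + 1))) := (Real.exp_log hGc).symm
      _ ≤ Real.exp (t * Real.log (Real.Gamma (N/2)) + s * Real.log (Real.Gamma N)) :=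
          Real.exp_le_exp.2 hconv
      _ = Real.Gamma (N/2) ^ t * Real.Gamma N ^ s := by rw [Real.exp_add, e1, e2]
  rw [Real.Gamma_add_one (ne_of_gt ha)] at hG1
  -- Gamma N = (n-1)!
  have hGn : Real.Gamma N = ((n-1).factorial : ℝ) := by
    have h1 : N = ((n-1:ℕ):ℝ) + 1 := by
      have : (1:ℕ) ≤ n := by omega
      push_cast [Nat.cast_sub this]
      ring
    rw [h1, Real.Gamma_nat_eq_factorial]
  -- factorial bound
  have hfact : Real.Gamma N ≤ (N / 2) ^ ((n-1 : ℕ) : ℝ) := by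
    rw [hGn]
    have h2 := aux2 (n-1)
    have hcast : ((n-1:ℕ):ℝ) + 1 = N := by
      have : (1:ℕ) ≤ n := by omega
      push_cast [Nat.cast_sub this]; ring
    rw [hcast] at h2
    have h3 : ((n-1).factorial : ℝ) ≤ (N/2)^(n-1 : ℕ) := by
      rw [div_pow]
      rw [le_div_iff₀ (by positivity)]
      calc ((n-1).factorial : ℝ) * 2^(n-1)
          = 2^(n-1) * ((n-1).factorial : ℝ) := by ring
        _ ≤ N^(n-1) := h2
    calc ((n-1).factorial : ℝ) ≤ (N/2)^(n-1 : ℕ) := h3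
      _ = (N/2) ^ ((n-1 : ℕ) : ℝ) := (Real.rpow_natCast _ _).symm
  -- Gamma N ^ s ≤ (N/2)^t
  have hGns : Real.Gamma N ^ s ≤ (N / 2) ^ t := by
    have h4 : Real.Gamma N ^ s ≤ ((N/2) ^ ((n-1:ℕ):ℝ)) ^ s :=
      Real.rpow_le_rpow hGy.le hfact hs0.le
    have h5 : ((N/2) ^ ((n-1:ℕ):ℝ)) ^ s = (N/2) ^ t := by
      rw [← Real.rpow_mul (by positivity)]
      congr 1
      have h1 : ((n-1:ℕ):ℝ) = N - 1 := by
        have : (1:ℕ) ≤ n := by omega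
        push_cast [Nat.cast_sub this]; ring
      rw [h1, htdef, hsdef]
      field_simp
    linarith [h4, h5.le, h5.ge]
  -- (N/2)^t = N^t * 2^s / 2
  have hhalf : (N / 2) ^ t = N ^ t * 2 ^ s / 2 := by
    rw [Real.div_rpow hN0.le (by norm_num)]
    have h2 : (2:ℝ) ^ t * (2:ℝ) ^ s = 2 := by
      rw [← Real.rpow_add (by norm_num), hts, Real.rpow_one]
    field_simp
    rw [h2]
  -- combine
  have hP : 0 < Real.Gamma (N / 2) ^ t := Real.rpow_pos_of_pos hGx t
  rw [div_le_div_iff₀ hP (by linarith : (0:ℝ) < N - 1)]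
  have key : Real.Gamma ((N-1)/2) * (N - 1) * (1/2) ≤
      Real.Gamma (N/2) ^ t * Real.Gamma N ^ s := by
    calc Real.Gamma ((N-1)/2) * (N - 1) * (1/2)
        = (N-1)/2 * Real.Gamma ((N-1)/2) := by ring
      _ ≤ Real.Gamma (N/2) ^ t * Real.Gamma N ^ s := hG1
  have hRHS : Real.Gamma (N/2) ^ t * Real.Gamma N ^ s ≤
      Real.Gamma (N/2) ^ t * (N ^ t * 2 ^ s / 2) := by
    apply mul_le_mul_of_nonneg_left _ hP.le
    rw [← hhalf]; exact hGns
  nlinarith [key, hRHS, hP]
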